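/- Let B : H₊ → H₋ be a bounded linear operator with ‖B‖ ≤ 1, and define the bounded operator 𝔅 on H₊ × H₋ by 𝔅(x, y) := (x + B*y, Bx + y). Then 𝔅 is bijective (equivalently, boundedly invertible) if and only if ‖B‖ < 1. -/

import Mathlib

private lemma operatorMatrix_aux_sqrt_lt_one (K : ℝ) (hK1 : 1 ≤ K) :
    Real.sqrt (1 - 1/K^2) < 1 := by
  have hKsq : (0:ℝ) < K^2 := by positivity
  have hinv : (0:ℝ) < 1/K^2 := by positivity
  have hle1 : (1:ℝ)/K^2 ≤ 1 := by rw [div_le_one hKsq]; nlinarith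
  have hcsq : (Real.sqrt (1 - 1/K^2))^2 = 1 - 1/K^2 := Real.sq_sqrt (by linarith)
  nlinarith [Real.sqrt_nonneg (1 - 1/K^2)]

private lemma operatorMatrix_aux_arith (K a b t : ℝ) (hK1 : 1 ≤ K)
    (ha : 0 ≤ a) (hb : 0 ≤ b) (_ht : 0 ≤ t)
    (h1 : a ≤ K * t) (h2 : t^2 ≤ a^2 - b^2) :
    b ≤ Real.sqrt (1 - 1/K^2) * a := by
  have hKpos : (0:ℝ) < K := lt_of_lt_of_le one_pos hK1
  have hKsq : (0:ℝ) < K^2 := by positivity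
  have hK2 : (1/K^2) * K^2 = 1 := by field_simp
  have hle1 : (1:ℝ)/K^2 ≤ 1 := by rw [div_le_one hKsq]; nlinarith
  have h4 : a^2 ≤ K^2 * (a^2 - b^2) := by nlinarith
  have h3 : b^2 ≤ (1 - 1/K^2) * a^2 := by nlinarith
  calc b = Real.sqrt (b^2) := (Real.sqrt_sq hb).symm
    _ ≤ Real.sqrt ((1 - 1/K^2) * a^2) := Real.sqrt_le_sqrt h3
    _ = Real.sqrt (1 - 1/K^2) * a := by
        rw [Real.sqrt_mul (by linarith : (0:ℝ) ≤ 1 - 1/K^2), Real.sqrt_sq ha]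

open ContinuousLinearMap

/-- For `B : H₊ →L[ℂ] H₋` with `‖B‖ ≤ 1`, the operator
`𝔅(x,y) = (x + B*y, Bx + y)` on `H₊ × H₋` (the operator matrix `[[Id, B*],[B, Id]]`)
is bijective if and only if `‖B‖ < 1`. -/
theorem operatorMatrix_bijective_iff_norm_lt_one
    {Hp Hm : Type*}
    [NormedAddCommGroup Hp] [InnerProductSpace ℂ Hp] [CompleteSpace Hp]
    [NormedAddCommGroup Hm] [InnerProductSpace ℂ Hm] [CompleteSpace Hm]
    (B : Hp →L[ℂ] Hm) (hB : ‖B‖ ≤ 1) :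
    Function.Bijective
        (fun p : Hp × Hm => (p.1 + ContinuousLinearMap.adjoint B p.2, B p.1 + p.2))
      ↔ ‖B‖ < 1 := by
  set N : Hp × Hm →L[ℂ] Hp × Hm :=
    ((ContinuousLinearMap.adjoint B).comp (ContinuousLinearMap.snd ℂ Hp Hm)).prod
      (B.comp (ContinuousLinearMap.fst ℂ Hp Hm)) with hN
  set T : Hp × Hm →L[ℂ] Hp × Hm := 1 + N with hT
  have hfun : (fun p : Hp × Hm => (p.1 + ContinuousLinearMap.adjoint B p.2, B p.1 + p.2))
      = ⇑T := by
    funext p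
    simp [hT, hN, Prod.ext_iff, ContinuousLinearMap.add_apply, add_comm]
  rw [hfun]
  have hadj : ‖ContinuousLinearMap.adjoint B‖ = ‖B‖ :=
    (ContinuousLinearMap.adjoint : (Hp →L[ℂ] Hm) ≃ₗᵢ⋆[ℂ] _).norm_map B
  constructor
  · intro hbij
    have hker : LinearMap.ker T = ⊥ := LinearMap.ker_eq_bot.mpr (by exact hbij.1)
    have hrange : LinearMap.range T = ⊤ := LinearMap.range_eq_top.mpr (by exact hbij.2)
    obtain ⟨K, hK1, hbound⟩ : ∃ K : ℝ, 1 ≤ K ∧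
        ∀ x : Hp, ‖x‖ ≤ K * ‖x - ContinuousLinearMap.adjoint B (B x)‖ := by
      let e := ContinuousLinearEquiv.ofBijective T hker hrange
      refine ⟨max ‖(e.symm : Hp × Hm →L[ℂ] Hp × Hm)‖ 1, le_max_right _ _, fun x => ?_⟩
      have hTe : T (x, -(B x)) = (x - ContinuousLinearMap.adjoint B (B x), 0) := by
        simp [hT, hN, Prod.ext_iff, ContinuousLinearMap.add_apply, sub_eq_add_neg]
      have h2 : e.symm (e (x, -(B x))) = (x, -(B x)) := e.symm_apply_apply _
      have h3 : ‖e.symm (e (x, -(B x)))‖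
          ≤ ‖(e.symm : Hp × Hm →L[ℂ] Hp × Hm)‖ * ‖e (x, -(B x))‖ :=
        (e.symm : Hp × Hm →L[ℂ] Hp × Hm).le_opNorm _
      have h4 : (e (x, -(B x)) : Hp × Hm) = (x - ContinuousLinearMap.adjoint B (B x), 0) := hTe
      have h5 : ‖((x - ContinuousLinearMap.adjoint B (B x), (0:Hm)) : Hp × Hm)‖
          = ‖x - ContinuousLinearMap.adjoint B (B x)‖ := by
        simp [Prod.norm_def]
      calc ‖x‖ ≤ ‖(x, -(B x))‖ := le_max_left _ _
        _ = ‖e.symm (e (x, -(B x)))‖ := by rw [h2]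
        _ ≤ ‖(e.symm : Hp × Hm →L[ℂ] Hp × Hm)‖ * ‖e (x, -(B x))‖ := h3
        _ ≤ (max ‖(e.symm : Hp × Hm →L[ℂ] Hp × Hm)‖ 1) * ‖e (x, -(B x))‖ :=
            mul_le_mul_of_nonneg_right (le_max_left _ _) (norm_nonneg _)
        _ = (max ‖(e.symm : Hp × Hm →L[ℂ] Hp × Hm)‖ 1) *
            ‖x - ContinuousLinearMap.adjoint B (B x)‖ := by rw [h4, h5]
    have hKpos : (0:ℝ) < K := lt_of_lt_of_le one_pos hK1
    have hKsq : (0:ℝ) < K^2 := by positivity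
    have hsq : ∀ x : Hp, ‖x - ContinuousLinearMap.adjoint B (B x)‖^2 ≤ ‖x‖^2 - ‖B x‖^2 := by
      intro x
      have hinner : RCLike.re (inner ℂ x (ContinuousLinearMap.adjoint B (B x)) : ℂ)
          = ‖B x‖^2 := by
        rw [ContinuousLinearMap.adjoint_inner_right]
        exact inner_self_eq_norm_sq _
      have hexp : ‖x - ContinuousLinearMap.adjoint B (B x)‖^2
          = ‖x‖^2 - 2 * ‖B x‖^2 + ‖ContinuousLinearMap.adjoint B (B x)‖^2 := by
        rw [@norm_sub_sq ℂ, hinner]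
      have hBB : ‖ContinuousLinearMap.adjoint B (B x)‖ ≤ ‖B x‖ := by
        calc ‖ContinuousLinearMap.adjoint B (B x)‖
            ≤ ‖ContinuousLinearMap.adjoint B‖ * ‖B x‖ := le_opNorm _ _
          _ ≤ 1 * ‖B x‖ := by
              apply mul_le_mul_of_nonneg_right _ (norm_nonneg _); rw [hadj]; exact hB
          _ = ‖B x‖ := one_mul _
      nlinarith [norm_nonneg (B x), norm_nonneg (ContinuousLinearMap.adjoint B (B x))]
    have hBle : ‖B‖ ≤ Real.sqrt (1 - 1/K^2) := by
      apply ContinuousLinearMap.opNorm_le_bound _ (Real.sqrt_nonneg _)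
      intro x
      exact operatorMatrix_aux_arith K ‖x‖ ‖B x‖ ‖x - ContinuousLinearMap.adjoint B (B x)‖
        hK1 (norm_nonneg _) (norm_nonneg _) (norm_nonneg _) (hbound x) (hsq x)
    exact lt_of_le_of_lt hBle (operatorMatrix_aux_sqrt_lt_one K hK1)
  · intro hBlt
    have hNnorm : ‖N‖ < 1 := by
      apply lt_of_le_of_lt _ hBlt
      apply ContinuousLinearMap.opNorm_le_bound _ (norm_nonneg B)
      intro p
      have h1 : ‖N p‖ = max ‖ContinuousLinearMap.adjoint B p.2‖ ‖B p.1‖ := by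
        simp [hN, Prod.norm_def]
      rw [h1]
      apply max_le
      · calc ‖ContinuousLinearMap.adjoint B p.2‖ ≤ ‖ContinuousLinearMap.adjoint B‖ * ‖p.2‖ :=
            le_opNorm _ _
          _ ≤ ‖B‖ * ‖p‖ := by
              rw [hadj]
              exact mul_le_mul_of_nonneg_left (le_max_right _ _) (norm_nonneg B)
      · calc ‖B p.1‖ ≤ ‖B‖ * ‖p.1‖ := le_opNorm _ _
          _ ≤ ‖B‖ * ‖p‖ := mul_le_mul_of_nonneg_left (le_max_left _ _) (norm_nonneg B)
    rw [← ContinuousLinearMap.isUnit_iff_bijective]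
    have hneg : ‖-N‖ < 1 := by rw [norm_neg N]; exact hNnorm
    have : T = 1 - (-N) := by rw [hT, sub_neg_eq_add]
    rw [this]
    exact isUnit_one_sub_of_norm_lt_one hneg
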